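/- Let ℝ^d be equipped with the supremum norm ‖x‖_∞ = max_i |x_i| (so closed balls are axis-parallel cubes). Let R = {p_1, …, p_n} be a set of n pairwise distinct points of ℝ^d, let ρ_1, …, ρ_n > 0, and let K_i be the closed ℓ∞-ball of radius ρ_i centered at p_i. Let B be another finite set of points of ℝ^d and λ > 0, and assume that for every i one has |B ∩ K_i| ≥ λ·|R ∩ K_i|. Then λ·|R| ≤ 2^d·|B|, i.e., |B|/|R| ≥ λ/2^d. -/
import Mathlib

set_option maxRecDepth 8000

def sel {d : ℕ} (q : ℕ → Fin d → ℝ) (r : ℕ → ℝ) : ℕ → Prop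
  | k => ∀ l, l < k → sel q r l → ¬ dist (q k) (q l) ≤ r l
  termination_by k => k

lemma sel_iff {d : ℕ} (q : ℕ → Fin d → ℝ) (r : ℕ → ℝ) (k : ℕ) :
    sel q r k ↔ ∀ l, l < k → sel q r l → ¬ dist (q k) (q l) ≤ r l := by
  rw [sel]

lemma sel_cover {d : ℕ} (q : ℕ → Fin d → ℝ) (r : ℕ → ℝ) (k : ℕ) (hk : 0 ≤ r k) :
    ∃ l ≤ k, sel q r l ∧ dist (q k) (q l) ≤ r l := by
  by_cases hs : sel q r k
  · exact ⟨k, le_refl _, hs, by simpa using hk⟩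
  · rw [sel_iff] at hs
    push_neg at hs
    obtain ⟨l, hlk, hsl, hd⟩ := hs
    exact ⟨l, hlk.le, hsl, hd⟩

lemma mult_le {d : ℕ} (q : ℕ → Fin d → ℝ) (r : ℕ → ℝ)
    (anti : ∀ l k : ℕ, l ≤ k → r k ≤ r l) (x : Fin d → ℝ) (T : Finset ℕ)
    (hT : ∀ k ∈ T, sel q r k ∧ dist x (q k) ≤ r k) : T.card ≤ 2 ^ d := by
  classical
  set f : ℕ → (Fin d → Bool) := fun k m => decide (q k m ≤ x m) with hf
  have aux : ∀ k ∈ T, ∀ l ∈ T, l < k → f k = f l → False := by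
    intro k hk l hl hlk hfe
    obtain ⟨hselk, hdk⟩ := hT k hk
    obtain ⟨hsell, hdl⟩ := hT l hl
    have hrk0 : 0 ≤ r k := le_trans dist_nonneg hdk
    have hrkl : r k ≤ r l := anti l k hlk.le
    refine (sel_iff q r k).mp hselk l hlk hsell ?_
    rw [dist_pi_le_iff (le_trans hrk0 hrkl)]
    intro m
    have h1 : dist (x m) (q k m) ≤ r k := le_trans (dist_le_pi_dist x (q k) m) hdk
    have h2 : dist (x m) (q l m) ≤ r l := le_trans (dist_le_pi_dist x (q l) m) hdl
    have hs : decide (q k m ≤ x m) = decide (q l m ≤ x m) := congrFun hfe m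
    rw [decide_eq_decide] at hs
    rw [Real.dist_eq, abs_le] at h1 h2 ⊢
    by_cases hc : q k m ≤ x m
    · have hc' : q l m ≤ x m := hs.mp hc
      constructor <;> linarith
    · have hc' : ¬ q l m ≤ x m := fun h' => hc (hs.mpr h')
      push_neg at hc hc'
      constructor <;> linarith
  have hinj : Set.InjOn f T := by
    intro k hk l hl hkl
    rcases lt_trichotomy k l with hlt | heq | hgt
    · exact absurd (aux l hl k hk hlt hkl.symm) not_false
    · exact heq
    · exact absurd (aux k hk l hl hgt hkl) not_false
  calc T.card = (T.image f).card := (Finset.card_image_of_injOn hinj).symm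
    _ ≤ Fintype.card (Fin d → Bool) := Finset.card_le_univ _
    _ = 2 ^ d := by simp

/-- Local-to-global theorem for the sup norm on `ℝ^d` (closed balls are
axis-parallel cubes): if in each cube `K i` the number of blue points is at
least `λ` times the number of red points, then `λ * |R| ≤ 2 ^ d * |B|`. -/
theorem stmt_4 {d : ℕ} {n : ℕ} (p : Fin n → (Fin d → ℝ))
    (hp : Function.Injective p) (ρ : Fin n → ℝ) (hρ : ∀ i, 0 < ρ i)
    (B : Set (Fin d → ℝ)) (hB : B.Finite) (lam : ℝ) (hlam : 0 < lam)
    (h : ∀ i, lam * (Set.range p ∩ Metric.closedBall (p i) (ρ i)).ncard ≤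
              ((B ∩ Metric.closedBall (p i) (ρ i)).ncard : ℝ)) :
    lam * n ≤ 2 ^ d * B.ncard := by
  classical
  set σ : Equiv.Perm (Fin n) := Tuple.sort (fun i => -ρ i) with hσdef
  have hσ : Monotone ((fun i => -ρ i) ∘ σ) := Tuple.monotone_sort _
  set q : ℕ → Fin d → ℝ := fun k => if h : k < n then p (σ ⟨k, h⟩) else 0 with hq
  set r : ℕ → ℝ := fun k => if h : k < n then ρ (σ ⟨k, h⟩) else 0 with hr
  have qdef : ∀ i : Fin n, q i.val = p (σ i) := by
    intro i; simp only [hq, dif_pos i.isLt, Fin.eta]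
  have rdef : ∀ i : Fin n, r i.val = ρ (σ i) := by
    intro i; simp only [hr, dif_pos i.isLt, Fin.eta]
  have anti : ∀ l k : ℕ, l ≤ k → r k ≤ r l := by
    intro l k hlk
    by_cases hk : k < n
    · have hl : l < n := lt_of_le_of_lt hlk hk
      simp only [hr, dif_pos hk, dif_pos hl]
      have := hσ (show (⟨l, hl⟩ : Fin n) ≤ ⟨k, hk⟩ from hlk)
      simpa using this
    · by_cases hl : l < n
      · simp only [hr, dif_neg hk, dif_pos hl]
        exact (hρ _).le
      · simp only [hr, dif_neg hk, dif_neg hl, le_refl]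
  set K : Fin n → Set (Fin d → ℝ) := fun i => Metric.closedBall (q i.val) (r i.val) with hK
  set S : Finset (Fin n) := Finset.univ.filter (fun i => sel q r i.val) with hS
  set Ri : Fin n → Finset (Fin n) := fun i => Finset.univ.filter (fun j => p j ∈ K i) with hRi
  set T : Finset (Fin d → ℝ) := hB.toFinset with hT
  set Bi : Fin n → Finset (Fin d → ℝ) := fun i => T.filter (fun b => b ∈ K i) with hBi
  -- coverage
  have cover : (Finset.univ : Finset (Fin n)) ⊆ S.biUnion Ri := by
    intro j _
    set j' : Fin n := σ.symm j with hj'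
    have hqj : q j'.val = p j := by rw [qdef j', Equiv.apply_symm_apply]
    have hrpos : 0 ≤ r j'.val := by rw [rdef j']; exact (hρ _).le
    obtain ⟨l, hl, hsl, hd⟩ := sel_cover q r j'.val hrpos
    have hln : l < n := lt_of_le_of_lt hl j'.isLt
    refine Finset.mem_biUnion.mpr ⟨⟨l, hln⟩, ?_, ?_⟩
    · simp only [hS, Finset.mem_filter, Finset.mem_univ, true_and]
      exact hsl
    · simp only [hRi, Finset.mem_filter, Finset.mem_univ, true_and, hK,
        Metric.mem_closedBall]
      rw [← hqj]; exact hd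
  have cardA : n ≤ ∑ i ∈ S, (Ri i).card := by
    calc n = (Finset.univ : Finset (Fin n)).card := by simp
      _ ≤ (S.biUnion Ri).card := Finset.card_le_card cover
      _ ≤ ∑ i ∈ S, (Ri i).card := Finset.card_biUnion_le
  -- local hypothesis per i
  have stepB : ∀ i : Fin n, lam * (Ri i).card ≤ ((Bi i).card : ℝ) := by
    intro i
    have hKi : K i = Metric.closedBall (p (σ i)) (ρ (σ i)) := by
      show Metric.closedBall (q i.val) (r i.val) = _
      rw [qdef i, rdef i]
    have e1 : (Set.range p ∩ K i).ncard = (Ri i).card := by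
      rw [Set.inter_comm, ← Set.image_preimage_eq_inter_range,
        Set.ncard_image_of_injective _ hp,
        Set.ncard_eq_toFinset_card _ (Set.toFinite _)]
      congr 1
      ext j
      simp [hRi]
    have e2 : (B ∩ K i).ncard = (Bi i).card := by
      rw [Set.ncard_eq_toFinset_card _ (hB.inter_of_left _)]
      congr 1
      ext b
      simp [hBi, hT, Set.Finite.mem_toFinset]
    have := h (σ i)
    rw [← hKi] at this
    rw [e1, e2] at this
    exact this
  -- multiplicity bound
  have stepC : ∑ i ∈ S, (Bi i).card ≤ T.card * 2 ^ d := by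
    calc ∑ i ∈ S, (Bi i).card
        = ∑ i ∈ S, ∑ b ∈ T, (if b ∈ K i then 1 else 0) :=
          Finset.sum_congr rfl fun i _ => Finset.card_filter _ _
      _ = ∑ b ∈ T, ∑ i ∈ S, (if b ∈ K i then 1 else 0) := Finset.sum_comm
      _ = ∑ b ∈ T, (S.filter (fun i => b ∈ K i)).card :=
          Finset.sum_congr rfl fun b _ => (Finset.card_filter _ _).symm
      _ ≤ ∑ _b ∈ T, 2 ^ d := by
          refine Finset.sum_le_sum ?_
          intro b _
          have key : ((S.filter (fun i => b ∈ K i)).image Fin.val).card ≤ 2 ^ d := by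
            refine mult_le q r anti b _ ?_
            intro k hk
            obtain ⟨i, hi, rfl⟩ := Finset.mem_image.mp hk
            rw [Finset.mem_filter] at hi
            obtain ⟨hiS, hib⟩ := hi
            rw [hS, Finset.mem_filter] at hiS
            refine ⟨hiS.2, ?_⟩
            rw [hK] at hib
            exact Metric.mem_closedBall.mp hib
          rwa [Finset.card_image_of_injective _ Fin.val_injective] at key
      _ = T.card * 2 ^ d := by rw [Finset.sum_const, smul_eq_mul]
  -- assemble
  have hn : (n : ℝ) ≤ ∑ i ∈ S, ((Ri i).card : ℝ) := by exact_mod_cast cardA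
  calc lam * n ≤ lam * ∑ i ∈ S, ((Ri i).card : ℝ) :=
        mul_le_mul_of_nonneg_left hn hlam.le
    _ = ∑ i ∈ S, lam * ((Ri i).card : ℝ) := Finset.mul_sum _ _ _
    _ ≤ ∑ i ∈ S, ((Bi i).card : ℝ) := Finset.sum_le_sum (fun i _ => stepB i)
    _ = ((∑ i ∈ S, (Bi i).card : ℕ) : ℝ) := by push_cast; ring
    _ ≤ ((T.card * 2 ^ d : ℕ) : ℝ) := by exact_mod_cast stepC
    _ = 2 ^ d * B.ncard := by
        rw [Set.ncard_eq_toFinset_card _ hB]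
        push_cast
        ring
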